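/- arXiv:2507.10546 — 10 statements merged into one kernel-verified Lean document; each statement's English description precedes it below -/
import Mathlib

section
/- For a conjunctive semi-symbolic node with weights w ∈ ℝ^s (not all zero) and input x ∈ {−1,1}^s, f_w(x) > 0 if and only if max_j |w_j| > 2·Σ_{j ∈ J⁻} |w_j|, where J⁻ = {j : w_j x_j < 0}. -/
open Finset

/-- Maximum of the absolute values of the weights. -/
noncomputable def maxAbs {s : ℕ} (hs : 0 < s) (w : Fin s → ℝ) : ℝ :=
  Finset.univ.sup' ⟨⟨0, hs⟩, Finset.mem_univ _⟩ fun j => |w j|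

/-- Raw output of a conjunctive semi-symbolic node with weights `w` on input `x`. -/
noncomputable def fw {s : ℕ} (hs : 0 < s) (w x : Fin s → ℝ) : ℝ :=
  (∑ j, w j * x j) + (maxAbs hs w - ∑ j, |w j|)

theorem stmt_1 {s : ℕ} (hs : 0 < s) (w x : Fin s → ℝ)
    (hw : ∃ j, w j ≠ 0) (hx : ∀ j, x j = 1 ∨ x j = -1) :
    0 < fw hs w x ↔
      2 * ∑ j ∈ Finset.univ.filter (fun j => w j * x j < 0), |w j| < maxAbs hs w := by
  have key : ∑ j, w j * x j =
      ∑ j, (|w j| - 2 * (if w j * x j < 0 then |w j| else 0)) := by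
    apply Finset.sum_congr rfl
    intro j _
    rcases hx j with h | h <;> rw [h] <;>
      rcases lt_trichotomy (w j) 0 with hj | hj | hj <;>
      simp [abs_of_neg, abs_of_pos, abs_of_nonneg, hj, hj.le, hj.not_gt] <;> ring_nf <;>
      simp_all [abs_of_neg, abs_of_pos] <;> linarith [abs_nonneg (w j)]
  have key2 : fw hs w x = maxAbs hs w -
      2 * ∑ j ∈ Finset.univ.filter (fun j => w j * x j < 0), |w j| := by
    rw [fw, key, Finset.sum_sub_distrib, ← Finset.mul_sum, Finset.sum_ite,
      Finset.sum_const_zero]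
    ring
  rw [key2]
  constructor <;> intro h <;> linarith
end

section
/- Let w ∈ ℝ^s and let x ∈ {−1,1}^s satisfy f_w(x) > 0, with split weight w̃ defined by w̃_j = 6·x_j·𝟙(x_j = sign(w_j)) on the nonzero indices of w. If y ∈ {−1,1}^s satisfies Σ_j w̃_j y_j + (6 − Σ_j |w̃_j|) = 6 (the split node fires on y), then f_w(y) ≥ f_w(x) > 0; in particular, no negative example of the original node can fire the split node. -/
open Finset

theorem stmt_3 {s : ℕ} (hs : 0 < s) (w x y : Fin s → ℝ)
    (hx : ∀ j, x j = 1 ∨ x j = -1) (hy : ∀ j, y j = 1 ∨ y j = -1)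
    (hpos : 0 < fw hs w x)
    (wt : Fin s → ℝ)
    (hwt : ∀ j, wt j = if w j ≠ 0 ∧ x j = Real.sign (w j) then 6 * x j else 0)
    (hfire : (∑ j, wt j * y j) + (6 - ∑ j, |wt j|) = 6) :
    fw hs w x ≤ fw hs w y ∧ 0 < fw hs w y := by
  have hxabs : ∀ j, |x j| = 1 := by
    intro j; rcases hx j with h | h <;> rw [h] <;> norm_num
  have hyabs : ∀ j, |y j| = 1 := by
    intro j; rcases hy j with h | h <;> rw [h] <;> norm_num
  have hle : ∀ j ∈ Finset.univ, wt j * y j ≤ |wt j| := by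
    intro j _
    calc wt j * y j ≤ |wt j * y j| := le_abs_self _
    _ = |wt j| * |y j| := abs_mul _ _
    _ = |wt j| := by rw [hyabs j, mul_one]
  have hsum : ∑ j, |wt j| = ∑ j, wt j * y j := by linarith
  have heq : ∀ j ∈ Finset.univ, wt j * y j = |wt j| :=
    (Finset.sum_eq_sum_iff_of_le hle).mp hsum.symm
  have key : ∀ j, w j * x j ≤ w j * y j := by
    intro j
    by_cases hw : w j = 0
    · simp [hw]
    by_cases hxs : x j = Real.sign (w j)
    · have hwt' : wt j = 6 * x j := by rw [hwt j, if_pos ⟨hw, hxs⟩]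
      have h := heq j (Finset.mem_univ j)
      rw [hwt'] at h; replace h := h.symm
      have habs : |6 * x j| = 6 := by
        rw [abs_mul, hxabs j]; norm_num
      rw [habs] at h
      have hxy : y j = x j := by
        rcases hx j with h1 | h1 <;> rcases hy j with h2 | h2 <;>
          rw [h1, h2] at h ⊢ <;> norm_num at h
      rw [hxy]
    · have hwx : w j * x j = -|w j| := by
        rcases lt_trichotomy (w j) 0 with hlt | h0 | hgt
        · have : Real.sign (w j) = -1 := Real.sign_of_neg hlt
          rw [this] at hxs
          have hx1 : x j = 1 := by rcases hx j with h | h; exact h; exact absurd h hxs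
          rw [hx1, abs_of_neg hlt]; ring
        · exact absurd h0 hw
        · have : Real.sign (w j) = 1 := Real.sign_of_pos hgt
          rw [this] at hxs
          have hx1 : x j = -1 := by rcases hx j with h | h; exact absurd h hxs; exact h
          rw [hx1, abs_of_pos hgt]; ring
      have : -|w j| ≤ w j * y j := by
        have := neg_abs_le (w j * y j)
        rwa [abs_mul, hyabs j, mul_one] at this
      linarith [hwx ▸ this]
  have hsumle : ∑ j, w j * x j ≤ ∑ j, w j * y j :=
    Finset.sum_le_sum fun j _ => key j
  have hfle : fw hs w x ≤ fw hs w y := by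
    unfold fw; linarith
  exact ⟨hfle, lt_of_lt_of_le hpos hfle⟩
end

section
/- Given a conjunctive node with weights w ∈ ℝ^s, there exists a finite collection of discretised weight vectors w̃_1,…,w̃_L ∈ {−6,0,6}^s such that for every x ∈ {−1,1}^s, f_w(x) > 0 if and only if there exists i with f_{w̃_i}(x) > 0. -/
open Finset

lemma maxAbs_six {s : ℕ} (hs : 0 < s) (u : Fin s → ℝ) (hu : ∀ j, u j = 1 ∨ u j = -1) :
    maxAbs hs (fun j => 6 * u j) = 6 := by
  have h : ∀ j : Fin s, |6 * u j| = (6:ℝ) := by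
    intro j; rcases hu j with h | h <;> rw [h] <;> norm_num
  unfold maxAbs
  simp only [h]
  exact Finset.sup'_const _ 6

lemma fw_zero {s : ℕ} (hs : 0 < s) (x : Fin s → ℝ) :
    fw hs (0 : Fin s → ℝ) x = 0 := by
  unfold fw maxAbs
  simp
  exact Finset.sup'_const _ 0

lemma fw_six {s : ℕ} (hs : 0 < s) (u v : Fin s → ℝ)
    (hu : ∀ j, u j = 1 ∨ u j = -1) (hv : ∀ j, v j = 1 ∨ v j = -1) :
    0 < fw hs (fun j => 6 * u j) v ↔ v = u := by
  have habs : ∀ j : Fin s, |6 * u j| = (6:ℝ) := by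
    intro j; rcases hu j with h | h <;> rw [h] <;> norm_num
  have key : fw hs (fun j => 6 * u j) v = 6 - ∑ j, (6 - 6 * u j * v j) := by
    unfold fw
    rw [maxAbs_six hs u hu, Finset.sum_sub_distrib]
    simp only [habs, Finset.sum_const, nsmul_eq_mul]
    ring
  rw [key]
  constructor
  · intro h
    have hsum : ∑ j, (6 - 6 * u j * v j) < 6 := by linarith
    funext j
    have hnn : ∀ k ∈ Finset.univ, (0:ℝ) ≤ 6 - 6 * u k * v k := by
      intro k _
      rcases hu k with h1 | h1 <;> rcases hv k with h2 | h2 <;> rw [h1, h2] <;> norm_num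
    have hle : (6 - 6 * u j * v j) ≤ ∑ k, (6 - 6 * u k * v k) :=
      Finset.single_le_sum hnn (Finset.mem_univ j)
    have hlt : 6 - 6 * u j * v j < 6 := lt_of_le_of_lt hle hsum
    rcases hu j with h1 | h1 <;> rcases hv j with h2 | h2 <;>
      rw [h1, h2] <;> rw [h1, h2] at hlt <;> norm_num at hlt
  · intro h
    subst h
    have : ∀ j : Fin s, (6 - 6 * v j * v j) = 0 := by
      intro j; rcases hv j with h | h <;> rw [h] <;> norm_num
    simp only [this, Finset.sum_const_zero]
    norm_num

theorem stmt_4 {s : ℕ} (hs : 0 < s) (w : Fin s → ℝ) :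
    ∃ (L : ℕ) (W : Fin L → Fin s → ℝ),
      (∀ i j, W i j = -6 ∨ W i j = 0 ∨ W i j = 6) ∧
      ∀ x : Fin s → ℝ, (∀ j, x j = 1 ∨ x j = -1) →
        (0 < fw hs w x ↔ ∃ i, 0 < fw hs (W i) x) := by
  classical
  set xof : (Fin s → Bool) → (Fin s → ℝ) := fun σ j => if σ j then 1 else -1 with hxof
  have hxofpm : ∀ σ j, xof σ j = 1 ∨ xof σ j = -1 := by
    intro σ j; by_cases h : σ j <;> simp [hxof, h]
  set e := Fintype.equivFin (Fin s → Bool) with he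
  refine ⟨Fintype.card (Fin s → Bool),
    fun i => if 0 < fw hs w (xof (e.symm i)) then (fun j => 6 * xof (e.symm i) j) else 0,
    ?_, ?_⟩
  · intro i j
    beta_reduce
    by_cases h : 0 < fw hs w (xof (e.symm i))
    · rw [if_pos h]
      rcases hxofpm (e.symm i) j with h2 | h2 <;> rw [h2] <;> norm_num
    · rw [if_neg h]; right; left; rfl
  · intro x hx
    constructor
    · intro hpos
      set σ : Fin s → Bool := fun j => if x j = 1 then true else false with hσ
      have hxeq : xof σ = x := by
        funext j
        rcases hx j with h | h
        · simp [hxof, hσ, h]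
        · have hne : x j ≠ 1 := by rw [h]; norm_num
          have hσj : σ j = false := by simp [hσ, hne]
          simp [hxof, hσj, h]
      refine ⟨e σ, ?_⟩
      beta_reduce
      have hsymm : e.symm (e σ) = σ := Equiv.symm_apply_apply _ _
      rw [hsymm, hxeq, if_pos hpos]
      exact (fw_six hs x x hx hx).mpr rfl
    · rintro ⟨i, hi⟩
      beta_reduce at hi
      by_cases h : 0 < fw hs w (xof (e.symm i))
      · rw [if_pos h] at hi
        have := (fw_six hs (xof (e.symm i)) x (hxofpm _) hx).mp hi
        rw [this]
        exact h
      · rw [if_neg h, fw_zero] at hi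
        exact absurd hi (lt_irrefl 0)
end

section
/- Let w ∈ ℝ^s with nonzero index set J, and let x ∈ {−1,1}^s with f_w(x) > 0. Then the exclusion set E = {j ∈ J : x_j ≠ sign(w_j)} satisfies Σ_{j ∈ E} |w_j| < (max_j |w_j|)/2. -/
open Finset

theorem stmt_7 {s : ℕ} (hs : 0 < s) (w x : Fin s → ℝ)
    (hx : ∀ j, x j = 1 ∨ x j = -1) (hpos : 0 < fw hs w x) :
    ∑ j ∈ Finset.univ.filter (fun j => w j ≠ 0 ∧ x j ≠ Real.sign (w j)), |w j| <
      maxAbs hs w / 2 := by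
  have h1 : ∀ j, |w j| - w j * x j
      = if (w j ≠ 0 ∧ x j ≠ Real.sign (w j)) then 2 * |w j| else 0 := by
    intro j
    by_cases hw : w j = 0
    · simp [hw]
    · rcases lt_or_gt_of_ne hw with hneg | hpos'
      · rw [Real.sign_of_neg hneg] at *
        rcases hx j with h | h <;> simp [h, hw, abs_of_neg hneg] <;> norm_num <;> ring
      · rw [Real.sign_of_pos hpos'] at *
        rcases hx j with h | h <;> simp [h, hw, abs_of_pos hpos'] <;> norm_num <;> ring
  have h2 : ∑ j, |w j| - ∑ j, w j * x j
      = 2 * ∑ j ∈ Finset.univ.filter (fun j => w j ≠ 0 ∧ x j ≠ Real.sign (w j)), |w j| := by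
    rw [← Finset.sum_sub_distrib]
    rw [Finset.mul_sum, Finset.sum_filter]
    refine Finset.sum_congr rfl fun j _ => ?_
    rw [h1 j]
  have := hpos
  unfold fw at this
  linarith
end

section
/- Let w ∈ ℝ^s with nonzero index set J and let j₀ ∈ J satisfy |w_{j₀}| ≥ (max_j |w_j|)/2 and w_{j₀} > 0. Then every x ∈ {−1,1}^s with f_w(x) > 0 satisfies x_{j₀} = 1; symmetrically, if w_{j₀} < 0 with |w_{j₀}| ≥ (max_j |w_j|)/2 then x_{j₀} = −1. -/
open Finset

lemma key {s : ℕ} (hs : 0 < s) (w x : Fin s → ℝ) (j₀ : Fin s)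
    (hbig : maxAbs hs w / 2 ≤ |w j₀|)
    (hx : ∀ j, x j = 1 ∨ x j = -1)
    (hneg : w j₀ * x j₀ = -|w j₀|) : fw hs w x ≤ 0 := by
  have hsum : ∑ j, w j * x j ≤ (∑ j, |w j|) - 2 * |w j₀| := by
    have h1 : ∑ j, w j * x j = (∑ j ∈ univ.erase j₀, w j * x j) + w j₀ * x j₀ := by
      rw [Finset.sum_erase_add _ _ (mem_univ j₀)]
    have h2 : (∑ j ∈ univ.erase j₀, w j * x j) ≤ ∑ j ∈ univ.erase j₀, |w j| := by
      apply Finset.sum_le_sum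
      intro j _
      calc w j * x j ≤ |w j * x j| := le_abs_self _
        _ = |w j| * |x j| := abs_mul _ _
        _ = |w j| := by rcases hx j with h | h <;> simp [h]
    have h3 : (∑ j ∈ univ.erase j₀, |w j|) = (∑ j, |w j|) - |w j₀| := by
      rw [← Finset.sum_erase_add _ _ (mem_univ j₀)]; ring
    rw [h1, hneg]
    linarith [h2, h3]
  have hM : 2 * |w j₀| ≥ maxAbs hs w := by linarith
  unfold fw
  linarith
theorem stmt_9 {s : ℕ} (hs : 0 < s) (w x : Fin s → ℝ) (j₀ : Fin s)
    (hj₀ : w j₀ ≠ 0) (hbig : maxAbs hs w / 2 ≤ |w j₀|)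
    (hx : ∀ j, x j = 1 ∨ x j = -1) (hpos : 0 < fw hs w x) :
    (0 < w j₀ → x j₀ = 1) ∧ (w j₀ < 0 → x j₀ = -1) := by
  constructor
  · intro hw
    rcases hx j₀ with h | h
    · exact h
    · exfalso
      have := key hs w x j₀ hbig hx (by rw [h, abs_of_pos hw]; ring)
      linarith
  · intro hw
    rcases hx j₀ with h | h
    · exfalso
      have := key hs w x j₀ hbig hx (by rw [h, abs_of_neg hw]; ring)
      linarith
    · exact h
end

section
/- Let w ∈ ℝ^s, x_i ∈ {−1,1}^s a negative example (f_w(x_i) ≤ 0) with negative-case split weight w̃_i given by w̃_{i,j} = 6·x_{i,j}·𝟙(x_{i,j} ≠ sign(w_j)) on nonzero indices of w. If y ∈ {−1,1}^s is fired by w̃_i (raw output 6) and y ≠ x_i on the nonzero indices of w, then f_w(y) < f_w(x_i) ≤ 0; hence no positive example of w fires w̃_i. -/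
open Finset

theorem stmt_12 {s : ℕ} (hs : 0 < s) (w xi y : Fin s → ℝ)
    (hxi : ∀ j, xi j = 1 ∨ xi j = -1) (hy : ∀ j, y j = 1 ∨ y j = -1)
    (hneg : fw hs w xi ≤ 0)
    (wt : Fin s → ℝ)
    (hwt : ∀ j, wt j = if w j ≠ 0 ∧ xi j ≠ Real.sign (w j) then 6 * xi j else 0)
    (hfire : (∑ j, wt j * y j) + (6 - ∑ j, |wt j|) = 6)
    (hne : ∃ j, w j ≠ 0 ∧ y j ≠ xi j) :
    fw hs w y < fw hs w xi ∧ fw hs w xi ≤ 0 := by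
  have habs_y : ∀ j, |y j| = 1 := fun j => by rcases hy j with h | h <;> simp [h]
  have habs_xi : ∀ j, |xi j| = 1 := fun j => by rcases hxi j with h | h <;> simp [h]
  have hsum : ∑ j, wt j * y j = ∑ j, |wt j| := by linarith
  have hle : ∀ j ∈ Finset.univ, wt j * y j ≤ |wt j| := by
    intro j _
    calc wt j * y j ≤ |wt j * y j| := le_abs_self _
      _ = |wt j| * |y j| := abs_mul _ _
      _ = |wt j| := by rw [habs_y j, mul_one]
  have heq : ∀ j, wt j * y j = |wt j| :=
    fun j => (Finset.sum_eq_sum_iff_of_le hle).mp hsum j (Finset.mem_univ _)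
  have hkey : ∀ j, w j ≠ 0 → xi j ≠ Real.sign (w j) → y j = xi j := by
    intro j h1 h2
    have h := heq j
    rw [hwt j, if_pos ⟨h1, h2⟩, abs_mul, habs_xi j] at h
    rcases hxi j with hx | hx <;> rcases hy j with hyy | hyy <;>
      rw [hx, hyy] at h ⊢ <;> norm_num at h
  have hwx : ∀ j, w j ≠ 0 → xi j = Real.sign (w j) → w j * xi j = |w j| := by
    intro j h1 h2
    rcases lt_or_gt_of_ne h1 with hw | hw
    · rw [h2, Real.sign_of_neg hw, abs_of_neg hw]; ring
    · rw [h2, Real.sign_of_pos hw, abs_of_pos hw]; ring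
  have hterm : ∀ j ∈ Finset.univ, w j * y j ≤ w j * xi j := by
    intro j _
    by_cases h1 : w j = 0
    · simp [h1]
    by_cases h2 : xi j = Real.sign (w j)
    · rw [hwx j h1 h2]
      calc w j * y j ≤ |w j * y j| := le_abs_self _
        _ = |w j| := by rw [abs_mul, habs_y j, mul_one]
    · rw [hkey j h1 h2]
  obtain ⟨j0, hj1, hj2⟩ := hne
  have hx0 : xi j0 = Real.sign (w j0) := by
    by_contra h
    exact hj2 (hkey j0 hj1 h)
  have hy0 : y j0 = -xi j0 := by
    rcases hxi j0 with hx' | hx' <;> rcases hy j0 with hy' | hy' <;>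
      rw [hx', hy'] <;> norm_num <;> exact hj2 (by rw [hx', hy'])
  have hstrict : w j0 * y j0 < w j0 * xi j0 := by
    have hx : w j0 * xi j0 = |w j0| := hwx j0 hj1 hx0
    have habs : 0 < |w j0| := abs_pos.mpr hj1
    rw [hy0, hx]
    have : w j0 * -xi j0 = -|w j0| := by rw [← hx]; ring
    rw [this]
    linarith
  have hsumlt : ∑ j, w j * y j < ∑ j, w j * xi j :=
    Finset.sum_lt_sum hterm ⟨j0, Finset.mem_univ _, hstrict⟩
  refine ⟨?_, hneg⟩
  unfold fw
  linarith
end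

section
/- Let w ∈ ℝ^s with nonzero index set J. The map sending a positive example x (with f_w(x) > 0) to its exclusion set E(x) = {j ∈ J : x_j ≠ sign(w_j)} is a bijection between the set of positive example restrictions to J and the family of subsets E ⊆ J with Σ_{j ∈ E} |w_j| < (max_j |w_j|)/2. -/
open Finset

lemma sign_pm {r : ℝ} (h : r ≠ 0) : Real.sign r = 1 ∨ Real.sign r = -1 := by
  rcases lt_trichotomy r 0 with hr | hr | hr
  · exact Or.inr (Real.sign_of_neg hr)
  · exact absurd hr h
  · exact Or.inl (Real.sign_of_pos hr)

lemma fw_eq {s : ℕ} (hs : 0 < s) (w x : Fin s → ℝ)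
    (hx : ∀ j, x j = 1 ∨ x j = -1) :
    fw hs w x = maxAbs hs w -
      2 * ∑ j ∈ univ.filter (fun j => w j ≠ 0 ∧ x j ≠ Real.sign (w j)), |w j| := by
  have key : ∀ j, w j * x j =
      |w j| - (if w j ≠ 0 ∧ x j ≠ Real.sign (w j) then 2 * |w j| else 0) := by
    intro j
    rcases lt_trichotomy (w j) 0 with hw | hw | hw
    · rw [Real.sign_of_neg hw]
      rcases hx j with h1 | h1 <;> simp [h1, hw.ne, abs_of_neg hw] <;> norm_num <;> ring
    · simp [hw]
    · rw [Real.sign_of_pos hw]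
      rcases hx j with h1 | h1 <;> simp [h1, hw.ne', abs_of_pos hw] <;> norm_num <;> ring
  have hsum : ∑ j, w j * x j = ∑ j, |w j| -
      ∑ j, (if w j ≠ 0 ∧ x j ≠ Real.sign (w j) then 2 * |w j| else 0) := by
    rw [← Finset.sum_sub_distrib]
    exact Finset.sum_congr rfl fun j _ => key j
  rw [fw, hsum, ← Finset.sum_filter, Finset.mul_sum]
  ring

/-- The canonical positive example with exclusion set `E`. -/
noncomputable def invX {s : ℕ} (w : Fin s → ℝ) (E : Finset (Fin s)) : Fin s → ℝ :=
  fun j => if j ∈ E then -Real.sign (w j) else if w j = 0 then 1 else Real.sign (w j)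

lemma invX_pm {s : ℕ} (w : Fin s → ℝ) (E : Finset (Fin s))
    (hE : ∀ j ∈ E, w j ≠ 0) (j : Fin s) : invX w E j = 1 ∨ invX w E j = -1 := by
  unfold invX
  by_cases hj : j ∈ E
  · rcases sign_pm (hE j hj) with h | h <;> simp [hj, h]
  · by_cases hw : w j = 0
    · simp [hj, hw]
    · rcases sign_pm hw with h | h <;> simp [hj, hw, h]

lemma filter_invX {s : ℕ} (w : Fin s → ℝ) (E : Finset (Fin s))
    (hE : ∀ j ∈ E, w j ≠ 0) :
    univ.filter (fun j => w j ≠ 0 ∧ invX w E j ≠ Real.sign (w j)) = E := by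
  ext j
  simp only [mem_filter, mem_univ, true_and]
  constructor
  · rintro ⟨hw, hne⟩
    by_contra hj
    apply hne
    unfold invX
    simp [hj, hw]
  · intro hj
    have hw := hE j hj
    refine ⟨hw, ?_⟩
    unfold invX
    simp only [hj, if_true]
    rcases sign_pm hw with h | h <;> rw [h] <;> norm_num

theorem stmt_15 {s : ℕ} (hs : 0 < s) (w : Fin s → ℝ) :
    ∃ e : {x : Fin s → ℝ // (∀ j, x j = 1 ∨ x j = -1) ∧
            (∀ j, w j = 0 → x j = 1) ∧ 0 < fw hs w x} ≃
          {E : Finset (Fin s) // (∀ j ∈ E, w j ≠ 0) ∧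
            ∑ j ∈ E, |w j| < maxAbs hs w / 2},
      ∀ x, (e x).val =
        Finset.univ.filter (fun j => w j ≠ 0 ∧ x.val j ≠ Real.sign (w j)) := by
  refine ⟨⟨fun x => ⟨univ.filter (fun j => w j ≠ 0 ∧ x.val j ≠ Real.sign (w j)), ?_, ?_⟩,
          fun E => ⟨invX w E.val, invX_pm w E.val E.2.1, ?_, ?_⟩, ?_, ?_⟩, fun x => rfl⟩
  · intro j hj
    exact (mem_filter.mp hj).2.1
  · have hpos := x.2.2.2
    rw [fw_eq hs w x.val x.2.1] at hpos
    linarith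
  · intro j hw
    have hj : j ∉ E.val := fun hj => E.2.1 j hj hw
    simp [invX, hj, hw]
  · rw [fw_eq hs w _ (invX_pm w E.val E.2.1), filter_invX w E.val E.2.1]
    have := E.2.2
    linarith
  · rintro ⟨x, hpm, hz, hpos⟩
    apply Subtype.ext
    funext j
    simp only [invX]
    by_cases hj : j ∈ univ.filter (fun j => w j ≠ 0 ∧ x j ≠ Real.sign (w j))
    · obtain ⟨hw, hne⟩ := (mem_filter.mp hj).2
      simp only [hj, if_true]
      rcases sign_pm hw with h | h <;> rw [h] <;>
        rcases hpm j with h1 | h1 <;> rw [h1] <;> simp_all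
    · simp only [hj, if_false]
      by_cases hw : w j = 0
      · simp [hw, hz j hw]
      · have := mem_filter.not.mp hj
        simp only [mem_univ, true_and, not_and, not_not] at this
        simp [hw, this hw]
  · rintro ⟨E, hE, hsum⟩
    exact Subtype.ext (filter_invX w E hE)
end

section
/- Let w ∈ ℝ^s with nonzero index set J, and suppose E, E' ⊆ J both satisfy Σ_{j ∈ E} |w_j| < (max |w|)/2 and Σ_{j ∈ E'} |w_j| < (max |w|)/2, with the corresponding discretised split tensors w̃, w̃' defined by zeroing indices in the exclusion set and setting 6·sign(w_j) elsewhere on J. Then w̃ subsumes w̃' if and only if E' ⊊ E. -/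
open Finset

theorem stmt_16 {s : ℕ} (hs : 0 < s) (w : Fin s → ℝ)
    (J : Finset (Fin s)) (hJ : J = Finset.univ.filter (fun j => w j ≠ 0))
    (hJne : J.Nonempty)
    (E E' : Finset (Fin s)) (hE : E ⊂ J) (hE' : E' ⊂ J)
    (hsum : ∑ j ∈ E, |w j| < maxAbs hs w / 2)
    (hsum' : ∑ j ∈ E', |w j| < maxAbs hs w / 2)
    (wt wt' : Fin s → ℝ)
    (hwt : ∀ j, wt j = if j ∈ J \ E then 6 * Real.sign (w j) else 0)
    (hwt' : ∀ j, wt' j = if j ∈ J \ E' then 6 * Real.sign (w j) else 0) :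
    ((∀ j, wt j = 0 ∨ wt j = wt' j) ∧
      0 < (Finset.univ.filter (fun j => wt j ≠ 0)).card ∧
      (Finset.univ.filter (fun j => wt j ≠ 0)).card <
        (Finset.univ.filter (fun j => wt' j ≠ 0)).card) ↔ E' ⊂ E := by
  have hsign : ∀ j ∈ J, (6 : ℝ) * Real.sign (w j) ≠ 0 := by
    intro j hj
    rw [hJ, Finset.mem_filter] at hj
    have : Real.sign (w j) ≠ 0 := fun h => hj.2 (Real.sign_eq_zero_iff.mp h)
    positivity
  have hsupp : ∀ (F : Finset (Fin s)) (v : Fin s → ℝ),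
      (∀ j, v j = if j ∈ J \ F then 6 * Real.sign (w j) else 0) →
      Finset.univ.filter (fun j => v j ≠ 0) = J \ F := by
    intro F v hv
    ext j
    simp only [Finset.mem_filter, Finset.mem_univ, true_and, hv j]
    by_cases h : j ∈ J \ F
    · rw [if_pos h]
      simp [hsign j (Finset.mem_sdiff.mp h).1, h]
    · simp [h]
  rw [hsupp E wt hwt, hsupp E' wt' hwt']
  have hEJ := hE.subset
  have hE'J := hE'.subset
  constructor
  · rintro ⟨h1, _, h3⟩
    have hsub : J \ E ⊆ J \ E' := by
      intro j hj
      rcases h1 j with h | h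
      · rw [hwt j, if_pos hj] at h
        exact absurd h (hsign j (Finset.mem_sdiff.mp hj).1)
      · rw [hwt j, if_pos hj, hwt' j] at h
        by_contra hmem
        rw [if_neg hmem] at h
        exact hsign j (Finset.mem_sdiff.mp hj).1 h
    constructor
    · intro j hj
      have hjJ := hE'J hj
      by_contra hjE
      have : j ∈ J \ E := Finset.mem_sdiff.mpr ⟨hjJ, hjE⟩
      have := Finset.mem_sdiff.mp (hsub this)
      exact this.2 hj
    · intro hEE'
      have : J \ E' ⊆ J \ E := fun j hj => by
        rcases Finset.mem_sdiff.mp hj with ⟨hjJ, hjE'⟩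
        exact Finset.mem_sdiff.mpr ⟨hjJ, fun hjE => hjE' (hEE' hjE)⟩
      exact absurd (Finset.card_le_card this) (not_le.mpr h3)
  · rintro ⟨hsub, hne⟩
    have hsubd : J \ E ⊆ J \ E' := fun j hj => by
      rcases Finset.mem_sdiff.mp hj with ⟨hjJ, hjE⟩
      exact Finset.mem_sdiff.mpr ⟨hjJ, fun h => hjE (hsub h)⟩
    refine ⟨fun j => ?_, ?_, ?_⟩
    · by_cases hj : j ∈ J \ E
      · right; rw [hwt j, if_pos hj, hwt' j, if_pos (hsubd hj)]
      · left; rw [hwt j, if_neg hj]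
    · obtain ⟨x, hxJ, hxE⟩ := Finset.exists_of_ssubset hE
      exact Finset.card_pos.mpr ⟨x, Finset.mem_sdiff.mpr ⟨hxJ, hxE⟩⟩
    · obtain ⟨x, hxE⟩ := Set.not_subset.mp (fun h => hne (fun a ha => h ha))
      refine Finset.card_lt_card (Finset.ssubset_iff_of_subset hsubd |>.mpr ?_)
      exact ⟨x, Finset.mem_sdiff.mpr ⟨hEJ hxE.1, hxE.2⟩,
        fun h => (Finset.mem_sdiff.mp h).2 hxE.1⟩
end

section
/- Let w ∈ ℝ^s be the weights of a conjunctive node with nonzero index set J and let 𝒳⁺ = {x ∈ {−1,1}^s : f_w(x) > 0} be nonempty. Then the antichain (under subsumption) of split tensors arising from the maximal exclusion sets E ⊆ J with Σ_{j∈E}|w_j| < (max|w|)/2 covers exactly 𝒳⁺: every x ∈ 𝒳⁺ fires at least one such split tensor, and no x with f_w(x) ≤ 0 fires any of them. -/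
open Finset

lemma sign_cases' {a : ℝ} (ha : a ≠ 0) : Real.sign a = 1 ∨ Real.sign a = -1 := by
  rcases ha.lt_or_gt with h | h
  · right; exact Real.sign_of_neg h
  · left; exact Real.sign_of_pos h

lemma mul_sign' {a : ℝ} (ha : a ≠ 0) : a * Real.sign a = |a| := by
  rcases ha.lt_or_gt with h | h
  · rw [Real.sign_of_neg h, abs_of_neg h]; ring
  · rw [Real.sign_of_pos h, abs_of_pos h]; ring

theorem stmt_17 {s : ℕ} (hs : 0 < s) (w : Fin s → ℝ)
    (J : Finset (Fin s)) (hJ : J = Finset.univ.filter (fun j => w j ≠ 0))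
    (ValidE : Finset (Fin s) → Prop)
    (hValid : ∀ E, ValidE E ↔ E ⊆ J ∧ ∑ j ∈ E, |w j| < maxAbs hs w / 2)
    (hXpos : ∃ x : Fin s → ℝ, (∀ j, x j = 1 ∨ x j = -1) ∧ 0 < fw hs w x) :
    ∀ x : Fin s → ℝ, (∀ j, x j = 1 ∨ x j = -1) →
      ((0 < fw hs w x →
        ∃ E, ValidE E ∧ (∀ E', ValidE E' → E ⊆ E' → E' = E) ∧
          ∀ j ∈ J \ E, x j = Real.sign (w j)) ∧
      (fw hs w x ≤ 0 →
        ∀ E, ValidE E → (∀ E', ValidE E' → E ⊆ E' → E' = E) →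
          ¬ ∀ j ∈ J \ E, x j = Real.sign (w j))) := by
  classical
  intro x hx
  set D : Finset (Fin s) := univ.filter (fun j => w j ≠ 0 ∧ x j ≠ Real.sign (w j)) with hD
  have hfw : fw hs w x = maxAbs hs w - 2 * ∑ j ∈ D, |w j| := fw_eq hs w x hx
  have hDJ : D ⊆ J := by
    intro j hj
    rw [hD, Finset.mem_filter] at hj
    rw [hJ, Finset.mem_filter]
    exact ⟨Finset.mem_univ _, hj.2.1⟩
  -- key equivalence: (∀ j ∈ J \ E, x j = sign (w j)) ↔ D ⊆ E
  have hkey : ∀ E : Finset (Fin s), ((∀ j ∈ J \ E, x j = Real.sign (w j)) ↔ D ⊆ E) := by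
    intro E
    constructor
    · intro h j hj
      rw [hD, Finset.mem_filter] at hj
      by_contra hjE
      exact hj.2.2 (h j (Finset.mem_sdiff.2 ⟨hDJ (by rw [hD, Finset.mem_filter]; exact hj), hjE⟩))
    · intro h j hj
      rw [Finset.mem_sdiff] at hj
      by_contra hxj
      have hwj : w j ≠ 0 := by
        have := hj.1; rw [hJ, Finset.mem_filter] at this; exact this.2
      exact hj.2 (h (by rw [hD, Finset.mem_filter]; exact ⟨Finset.mem_univ _, hwj, hxj⟩))
  constructor
  · intro hpos
    have hDsum : ∑ j ∈ D, |w j| < maxAbs hs w / 2 := by linarith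
    -- family of valid supersets of D
    set S : Finset (Finset (Fin s)) := J.powerset.filter (fun F => ValidE F ∧ D ⊆ F) with hS
    have hDS : D ∈ S := by
      rw [hS, Finset.mem_filter, Finset.mem_powerset]
      exact ⟨hDJ, (hValid D).2 ⟨hDJ, hDsum⟩, Finset.Subset.refl D⟩
    obtain ⟨E, hES, hEmax⟩ : ∃ E ∈ S, ∀ x ∈ S, ¬ E < x := by
      obtain ⟨E, hE⟩ := Finset.exists_maximal (s := S) ⟨D, hDS⟩
      exact ⟨E, hE.1, fun x hx hlt => absurd (hE.2 hx hlt.le) (not_le_of_gt hlt)⟩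
    rw [hS, Finset.mem_filter] at hES
    refine ⟨E, hES.2.1, ?_, (hkey E).2 hES.2.2⟩
    intro E' hE' hEE'
    by_contra hne
    have hE'S : E' ∈ S := by
      rw [hS, Finset.mem_filter, Finset.mem_powerset]
      exact ⟨((hValid E').1 hE').1, hE', hES.2.2.trans hEE'⟩
    exact hEmax E' hE'S (lt_of_le_of_ne hEE' (Ne.symm hne))
  · intro hneg E hE _ hall
    have hDE : D ⊆ E := (hkey E).1 hall
    have h1 : ∑ j ∈ D, |w j| ≤ ∑ j ∈ E, |w j| :=
      Finset.sum_le_sum_of_subset_of_nonneg hDE (fun j _ _ => abs_nonneg _)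
    have h2 := ((hValid E).1 hE).2
    linarith
end

section
/- For a disjunctive semi-symbolic node (δ = −1) with saturated weights w ∈ {−6,0,6}^s (not all zero) and input x ∈ {−1,1}^s, the raw output Σ_j w_j x_j − (max_j |w_j| − Σ_j |w_j|) is positive if and only if there exists j with w_j ≠ 0 and x_j = sign(w_j); i.e., the node realizes the disjunction of its literals. -/
open Finset

theorem stmt_19 {s : ℕ} (hs : 0 < s) (w x : Fin s → ℝ)
    (hw : ∀ j, w j = -6 ∨ w j = 0 ∨ w j = 6) (hne : ∃ j, w j ≠ 0)
    (hx : ∀ j, x j = 1 ∨ x j = -1) :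
    0 < (∑ j, w j * x j) - (maxAbs hs w - ∑ j, |w j|) ↔
      ∃ j, w j ≠ 0 ∧ x j = Real.sign (w j) := by
  obtain ⟨j0, hj0⟩ := hne
  -- maxAbs = 6
  have hmax : maxAbs hs w = 6 := by
    apply le_antisymm
    · apply Finset.sup'_le
      intro j _
      rcases hw j with h | h | h <;> simp [h, abs_of_nonneg, abs_of_nonpos]
    · have : |w j0| = 6 := by
        rcases hw j0 with h | h | h <;> simp [h] at hj0 ⊢ <;> norm_num
      calc (6:ℝ) = |w j0| := this.symm
        _ ≤ _ := Finset.le_sup' (fun j => |w j|) (Finset.mem_univ j0)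
  -- per-term dichotomy
  have key : ∀ j, (w j * x j + |w j| = 12 ∧ (w j ≠ 0 ∧ x j = Real.sign (w j))) ∨
      (w j * x j + |w j| = 0 ∧ ¬(w j ≠ 0 ∧ x j = Real.sign (w j))) := by
    intro j
    rcases hw j with h | h | h <;> rcases hx j with h2 | h2 <;>
      simp [h, h2, Real.sign] <;> norm_num
  have hsum : (∑ j, w j * x j) - (maxAbs hs w - ∑ j, |w j|)
      = (∑ j, (w j * x j + |w j|)) - 6 := by
    rw [hmax, Finset.sum_add_distrib]; ring
  rw [hsum]
  constructor
  · intro hpos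
    by_contra hcon
    push_neg at hcon
    have : ∀ j, w j * x j + |w j| = 0 := by
      intro j
      rcases key j with ⟨h1, h2, h3⟩ | ⟨h1, _⟩
      · exact absurd h3 (hcon j h2)
      · exact h1
    simp [this] at hpos
    linarith
  · rintro ⟨j, hjne, hjs⟩
    have h12 : w j * x j + |w j| = 12 := by
      rcases key j with ⟨h1, _⟩ | ⟨_, h2⟩
      · exact h1
      · exact absurd ⟨hjne, hjs⟩ h2
    have hle : (12:ℝ) ≤ ∑ j, (w j * x j + |w j|) := by
      rw [← h12]
      apply Finset.single_le_sum (f := fun j => w j * x j + |w j|)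
        (fun i _ => ?_) (Finset.mem_univ j)
      rcases key i with ⟨h1, _⟩ | ⟨h1, _⟩ <;> show 0 ≤ w i * x i + |w i| <;> linarith
    linarith
end
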